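/- Let 0 < p < q be coprime integers with p odd. Then σ(p, p+q) = σ(p, q) − 4·#{ j ∈ ℤ : 0 < j < p, j odd, (j·q mod 2p) > p } + (p−1)(p+3)/2, where (j·q mod 2p) denotes the unique representative in [0, 2p) of j·q modulo 2p. -/
import Mathlib


/-- Number of integer pairs `(i, j)` with `0 < i < p`, `0 < j < q` and
`t < i/p + j/q < t + 1` (Litherland's lattice-point count). -/
noncomputable def latticeCount (p q : ℕ) (t : ℝ) : ℕ :=
  Set.ncard {ij : ℕ × ℕ | 0 < ij.1 ∧ ij.1 < p ∧ 0 < ij.2 ∧ ij.2 < q ∧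
    t < (ij.1 : ℝ) / p + (ij.2 : ℝ) / q ∧ (ij.1 : ℝ) / p + (ij.2 : ℝ) / q < t + 1}

/-- The Levine–Tristram signature of the torus knot `T(p,q)` at `e^{2πit}`,
via Litherland's formula: `σ_t(p,q) = 2 N_t(p,q) − (p−1)(q−1)`. -/
noncomputable def sigmaT (p q : ℕ) (t : ℝ) : ℤ :=
  2 * (latticeCount p q t : ℤ) - ((p : ℤ) - 1) * ((q : ℤ) - 1)

/-- The maximum signature `σ̂(p,q) = sup_{t ∈ (0,1)} σ_t(p,q)`. -/
noncomputable def sigmaMax (p q : ℕ) : ℤ :=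
  sSup (sigmaT p q '' Set.Ioo (0 : ℝ) 1)

/-- The classical signature `σ(p,q) = σ_{1/2}(p,q)`. -/
noncomputable def sigmaClassical (p q : ℕ) : ℤ :=
  sigmaT p q (1 / 2)


open Finset
def cnt (p Q i : ℕ) : ℕ :=
  ((Finset.Ioo 0 Q).filter
    (fun j : ℕ => (Q:ℤ)*((p:ℤ)-2*(i:ℤ)) < 2*(p:ℤ)*(j:ℤ) ∧
      2*(p:ℤ)*(j:ℤ) < (Q:ℤ)*(3*(p:ℤ)-2*(i:ℤ)))).card

lemma real_int_iff (p Q i j : ℕ) (hp : 0 < p) (hQ : 0 < Q) :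
    ((1:ℝ)/2 < (i:ℝ)/p + (j:ℝ)/Q ∧ (i:ℝ)/p + (j:ℝ)/Q < 1/2 + 1) ↔
    ((Q:ℤ)*((p:ℤ)-2*(i:ℤ)) < 2*(p:ℤ)*(j:ℤ) ∧
      2*(p:ℤ)*(j:ℤ) < (Q:ℤ)*(3*(p:ℤ)-2*(i:ℤ))) := by
  have hp' : (0:ℝ) < p := by exact_mod_cast hp
  have hQ' : (0:ℝ) < Q := by exact_mod_cast hQ
  have e1 : ((Q:ℤ)*((p:ℤ)-2*(i:ℤ)) < 2*(p:ℤ)*(j:ℤ)) ↔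
      ((Q:ℝ)*((p:ℝ)-2*(i:ℝ)) < 2*(p:ℝ)*(j:ℝ)) := by exact_mod_cast Iff.rfl
  have e2 : (2*(p:ℤ)*(j:ℤ) < (Q:ℤ)*(3*(p:ℤ)-2*(i:ℤ))) ↔
      (2*(p:ℝ)*(j:ℝ) < (Q:ℝ)*(3*(p:ℝ)-2*(i:ℝ))) := by exact_mod_cast Iff.rfl
  rw [e1, e2, div_add_div _ _ hp'.ne' hQ'.ne', lt_div_iff₀ (by positivity),
    div_lt_iff₀ (by positivity)]
  constructor <;> rintro ⟨h1, h2⟩ <;> constructor <;> nlinarith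

lemma latticeCount_eq (p Q : ℕ) (hp : 0 < p) (hQ : 0 < Q) :
    latticeCount p Q (1/2) = ∑ i ∈ Finset.Ioo 0 p, cnt p Q i := by
  have hset : {ij : ℕ × ℕ | 0 < ij.1 ∧ ij.1 < p ∧ 0 < ij.2 ∧ ij.2 < Q ∧
      (1/2 : ℝ) < (ij.1 : ℝ) / p + (ij.2 : ℝ) / Q ∧
      (ij.1 : ℝ) / p + (ij.2 : ℝ) / Q < 1/2 + 1}
      = ↑(((Finset.Ioo 0 p) ×ˢ (Finset.Ioo 0 Q)).filter
          (fun ij : ℕ × ℕ => (Q:ℤ)*((p:ℤ)-2*(ij.1:ℤ)) < 2*(p:ℤ)*(ij.2:ℤ) ∧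
            2*(p:ℤ)*(ij.2:ℤ) < (Q:ℤ)*(3*(p:ℤ)-2*(ij.1:ℤ)))) := by
    ext ⟨i, j⟩
    simp only [Set.mem_setOf_eq, Finset.coe_filter, Finset.mem_product, Finset.mem_Ioo]
    constructor
    · rintro ⟨h1, h2, h3, h4, h5, h6⟩
      exact ⟨⟨⟨h1, h2⟩, h3, h4⟩, (real_int_iff p Q i j hp hQ).mp ⟨h5, h6⟩⟩
    · rintro ⟨⟨⟨h1, h2⟩, h3, h4⟩, hc⟩
      have := (real_int_iff p Q i j hp hQ).mpr hc
      exact ⟨h1, h2, h3, h4, this.1, this.2⟩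
  rw [latticeCount, hset, Set.ncard_coe_finset, Finset.card_filter, Finset.sum_product]
  simp only [cnt]
  exact Finset.sum_congr rfl fun i _ => (Finset.card_filter _ _).symm

lemma countA (p Q i : ℕ) (h2i : 2*i < p) (hQ : 0 < Q) :
    cnt p Q i = Q - (Q*(p-2*i))/(2*p) - 1 := by
  have hp : 0 < p := by omega
  have hpz : (0:ℤ) < p := by exact_mod_cast hp
  have hQz : (0:ℤ) < Q := by exact_mod_cast hQ
  have hcast : ((Q*(p-2*i) : ℕ) : ℤ) = (Q:ℤ)*((p:ℤ)-2*(i:ℤ)) := by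
    push_cast [Nat.cast_sub h2i.le]; ring
  have hseteq : ((Finset.Ioo 0 Q).filter
      (fun j : ℕ => (Q:ℤ)*((p:ℤ)-2*(i:ℤ)) < 2*(p:ℤ)*(j:ℤ) ∧
        2*(p:ℤ)*(j:ℤ) < (Q:ℤ)*(3*(p:ℤ)-2*(i:ℤ))))
      = Finset.Ioo ((Q*(p-2*i))/(2*p)) Q := by
    ext j
    simp only [mem_filter, mem_Ioo]
    constructor
    · rintro ⟨⟨hj0, hjQ⟩, h1, h2⟩
      refine ⟨?_, hjQ⟩
      rw [Nat.div_lt_iff_lt_mul (by omega)]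
      have h1' : ((Q*(p-2*i) : ℕ) : ℤ) < 2*(p:ℤ)*(j:ℤ) := by rw [hcast]; exact h1
      have : Q*(p-2*i) < 2*p*j := by exact_mod_cast h1'
      linarith [this]
    · rintro ⟨hdlt, hjQ⟩
      have hj0 : 0 < j := lt_of_le_of_lt (Nat.zero_le _) hdlt
      have hn : Q*(p-2*i) < j*(2*p) := (Nat.div_lt_iff_lt_mul (by omega)).mp hdlt
      refine ⟨⟨hj0, hjQ⟩, ?_, ?_⟩
      · have : ((Q*(p-2*i) : ℕ) : ℤ) < ((j*(2*p) : ℕ) : ℤ) := by exact_mod_cast hn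
        rw [hcast] at this
        push_cast at this
        linarith
      · have hjz : (j:ℤ) < (Q:ℤ) := by exact_mod_cast hjQ
        have hiz : 2*(i:ℤ) < (p:ℤ) := by exact_mod_cast h2i
        have t1 : 2*(p:ℤ)*(j:ℤ) ≤ 2*(p:ℤ)*((Q:ℤ)-1) :=
          mul_le_mul_of_nonneg_left (by linarith) (by linarith)
        have t2 : 2*(i:ℤ)*(Q:ℤ) ≤ ((p:ℤ)-1)*(Q:ℤ) :=
          mul_le_mul_of_nonneg_right (by linarith) (by linarith)
        nlinarith
  unfold cnt
  rw [hseteq, Nat.card_Ioo]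

lemma countB (p Q i : ℕ) (hi2 : p < 2*i) (hip : i < p) (hQ : 0 < Q)
    (hnd : ¬ (2*p) ∣ Q*(3*p-2*i)) :
    cnt p Q i = (Q*(3*p-2*i))/(2*p) := by
  have hp : 0 < p := by omega
  have hcast : ((Q*(3*p-2*i) : ℕ) : ℤ) = (Q:ℤ)*(3*(p:ℤ)-2*(i:ℤ)) := by
    push_cast [Nat.cast_sub (by omega : 2*i ≤ 3*p)]; ring
  have hseteq : ((Finset.Ioo 0 Q).filter
      (fun j : ℕ => (Q:ℤ)*((p:ℤ)-2*(i:ℤ)) < 2*(p:ℤ)*(j:ℤ) ∧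
        2*(p:ℤ)*(j:ℤ) < (Q:ℤ)*(3*(p:ℤ)-2*(i:ℤ))))
      = Finset.Icc 1 ((Q*(3*p-2*i))/(2*p)) := by
    ext j
    simp only [mem_filter, mem_Ioo, mem_Icc]
    constructor
    · rintro ⟨⟨hj0, hjQ⟩, h1, h2⟩
      refine ⟨hj0, ?_⟩
      have h2' : 2*(p:ℤ)*(j:ℤ) < ((Q*(3*p-2*i) : ℕ) : ℤ) := by rw [hcast]; exact h2
      have hn : 2*p*j < Q*(3*p-2*i) := by exact_mod_cast h2'
      rw [Nat.le_div_iff_mul_le (by omega)]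
      calc j*(2*p) = 2*p*j := by ring
        _ ≤ Q*(3*p-2*i) := hn.le
    · rintro ⟨hj1, hjd⟩
      have hjQ : j < Q := by
        refine lt_of_le_of_lt hjd ?_
        rw [Nat.div_lt_iff_lt_mul (by omega)]
        have h1 : 3*p-2*i < 2*p := by omega
        exact mul_lt_mul_of_pos_left h1 hQ
      have hmul : j*(2*p) ≤ Q*(3*p-2*i) := (Nat.le_div_iff_mul_le (by omega)).mp hjd
      have hne : j*(2*p) ≠ Q*(3*p-2*i) := fun h => hnd ⟨j, by rw [← h]; ring⟩
      have hlt : j*(2*p) < Q*(3*p-2*i) := lt_of_le_of_ne hmul hne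
      refine ⟨⟨by omega, hjQ⟩, ?_, ?_⟩
      · have hpz : (0:ℤ) < p := by exact_mod_cast hp
        have hQz : (0:ℤ) < Q := by exact_mod_cast hQ
        have hjz : (0:ℤ) < j := by exact_mod_cast hj1
        have hizp : (p:ℤ) < 2*i := by exact_mod_cast hi2
        have t1 : (Q:ℤ)*((p:ℤ)-2*(i:ℤ)) < 0 :=
          mul_neg_of_pos_of_neg hQz (by linarith)
        have t2 : (0:ℤ) < 2*(p:ℤ)*(j:ℤ) := by positivity
        linarith
      · have : ((j*(2*p) : ℕ) : ℤ) < ((Q*(3*p-2*i) : ℕ) : ℤ) := by exact_mod_cast hlt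
        rw [hcast] at this
        push_cast at this
        linarith
  unfold cnt
  rw [hseteq, Nat.card_Icc]
  exact Nat.add_sub_cancel ..

lemma keyD (p q m : ℕ) (hp : 0 < p) (hm : m % 2 = 1) (hnd : ¬ p ∣ q * m) :
    ((p+q)*m)/(2*p) = (m-1)/2 + (q*m)/(2*p) + (if p < (q*m) % (2*p) then 1 else 0) := by
  set d := (q*m)/(2*p) with hd
  set r := (q*m) % (2*p) with hr
  have hqm : q*m = 2*p*d + r := (Nat.div_add_mod _ _).symm
  have hr2p : r < 2*p := Nat.mod_lt _ (by omega)
  have hrp : r ≠ p := fun h => hnd ⟨2*d+1, by rw [hqm, h]; ring⟩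
  have hr0 : r ≠ 0 := fun h => hnd ⟨2*d, by rw [hqm, h]; ring⟩
  have key : (p+q)*m = 2*p*((m-1)/2 + d) + (p + r) := by
    have hm1 : m = 2*((m-1)/2) + 1 := by omega
    calc (p+q)*m = p*m + q*m := by ring
      _ = p*(2*((m-1)/2)+1) + (2*p*d + r) := by rw [← hm1, ← hqm]
      _ = 2*p*((m-1)/2 + d) + (p + r) := by ring
  rcases lt_or_gt_of_ne hrp with hlt | hgt
  · have e1 : (p + r)/(2*p) = 0 := Nat.div_eq_of_lt (by omega)
    rw [if_neg (by omega), key, Nat.mul_add_div (by omega), e1]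
  · have key2 : (p+q)*m = 2*p*((m-1)/2 + d + 1) + (r - p) := by
      have h1 : p + r = 2*p*1 + (r - p) := by omega
      rw [key, h1]; ring
    have e1 : (r - p)/(2*p) = 0 := Nat.div_eq_of_lt (by omega)
    rw [if_pos hgt, key2, Nat.mul_add_div (by omega), e1]

lemma keyF (p q m : ℕ) (hp : 0 < p) (hm2 : m < 2*p) (hnd : ¬ p ∣ q * m) :
    (q*(2*p - m)) % (2*p) = 2*p - (q*m) % (2*p) := by
  set d := (q*m)/(2*p) with hd
  set r := (q*m) % (2*p) with hr
  have hqm : q*m = 2*p*d + r := (Nat.div_add_mod _ _).symm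
  have hr2p : r < 2*p := Nat.mod_lt _ (by omega)
  have hr0 : r ≠ 0 := fun h => hnd ⟨2*d, by rw [hqm, h]; ring⟩
  have hq : 0 < q := by
    rcases Nat.eq_zero_or_pos q with h | h
    · exact absurd (by simp [h]) hnd
    · exact h
  have hdq : d + 1 ≤ q := by
    have h1 : q*m < q*(2*p) := mul_lt_mul_of_pos_left hm2 hq
    have h2 := (Nat.div_lt_iff_lt_mul (show 0 < 2*p by omega)).mpr
      (by linarith : q*m < q*(2*p))
    omega
  have hkey : q*(2*p - m) = 2*p*(q - d - 1) + (2*p - r) := by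
    zify [hm2.le, hr2p.le, (by omega : d ≤ q), (by omega : 1 ≤ q - d)]
    have hqmz : (q:ℤ)*(m:ℤ) = 2*(p:ℤ)*(d:ℤ) + (r:ℤ) := by exact_mod_cast hqm
    linear_combination (-1 : ℤ) * hqmz
  rw [hkey, Nat.mul_add_mod, Nat.mod_eq_of_lt (by omega)]

lemma pairDiff (p q i : ℕ) (hpq : p < q) (hco : Nat.Coprime p q) (hp2 : p % 2 = 1)
    (hi1 : 1 ≤ i) (h2i : 2*i < p) :
    cnt p (p+q) i + cnt p (p+q) (p-i)
      + 2*(if p < (q*(p-2*i)) % (2*p) then 1 else 0)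
    = cnt p q i + cnt p q (p-i) + (p + 2*i + 1) := by
  have hp : 0 < p := by omega
  have hQ1 : 0 < q := by omega
  have hQ2 : 0 < p + q := by omega
  have h3e : 3*p - 2*(p-i) = p + 2*i := by omega
  have hi2' : p < 2*(p-i) := by omega
  have hip' : p - i < p := by omega
  -- divisibility facts
  have hap : ¬ p ∣ (p - 2*i) := fun h => by
    have := Nat.le_of_dvd (by omega) h; omega
  have hc2 : Nat.Coprime p 2 := by
    rw [Nat.coprime_two_right]; exact Nat.odd_iff.mpr hp2
  have hap2 : ¬ p ∣ (p + 2*i) := by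
    intro h
    have h2 : p ∣ 2*i := (Nat.dvd_add_right (dvd_refl p)).mp h
    have h3 : p ∣ i := hc2.dvd_of_dvd_mul_left h2
    have := Nat.le_of_dvd (by omega) h3; omega
  have hco' : Nat.Coprime p (p+q) := by
    rw [Nat.add_comm]; exact (Nat.coprime_add_self_right).mpr hco
  have hqco : ∀ m, ¬ p ∣ m → ¬ p ∣ q * m := fun m hm h => hm (hco.dvd_of_dvd_mul_left h)
  have hpqco : ∀ m, ¬ p ∣ m → ¬ p ∣ (p+q) * m := fun m hm h => hm (hco'.dvd_of_dvd_mul_left h)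
  have l2p : ∀ x, ¬ p ∣ x → ¬ 2*p ∣ x := fun x hx h => hx (dvd_trans ⟨2, by ring⟩ h)
  -- rewrite the four counts
  rw [countA p q i h2i hQ1, countA p (p+q) i h2i hQ2,
    countB p q (p-i) hi2' hip' hQ1 (by rw [h3e]; exact l2p _ (hqco _ hap2)),
    countB p (p+q) (p-i) hi2' hip' hQ2 (by rw [h3e]; exact l2p _ (hpqco _ hap2)), h3e]
  -- key identities
  have e1 := keyD p q (p-2*i) hp (by omega) (hqco _ hap)
  have e2 := keyD p q (p+2*i) hp (by omega) (hqco _ hap2)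
  have e3 := keyF p q (p-2*i) hp (by omega) (hqco _ hap)
  rw [show 2*p - (p-2*i) = p + 2*i from by omega] at e3
  -- mod facts
  have hr2p : (q*(p-2*i)) % (2*p) < 2*p := Nat.mod_lt _ (by omega)
  have hrp : (q*(p-2*i)) % (2*p) ≠ p := by
    intro h
    exact hqco _ hap ⟨2*((q*(p-2*i))/(2*p))+1,
      by conv_lhs => rw [← Nat.div_add_mod (q*(p-2*i)) (2*p)]
         rw [h]; ring⟩
  have hr0 : (q*(p-2*i)) % (2*p) ≠ 0 := by
    intro h
    exact hqco _ hap ⟨2*((q*(p-2*i))/(2*p)),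
      by conv_lhs => rw [← Nat.div_add_mod (q*(p-2*i)) (2*p)]
         rw [h]; ring⟩
  -- bounds
  have hA1 : ((p+q)*(p-2*i))/(2*p) < p + q := by
    rw [Nat.div_lt_iff_lt_mul (by omega)]
    calc (p+q)*(p-2*i) < (p+q)*(2*p) := mul_lt_mul_of_pos_left (by omega) hQ2
      _ = (p+q)*(2*p) := rfl
  have ha1 : (q*(p-2*i))/(2*p) < q := by
    rw [Nat.div_lt_iff_lt_mul (by omega)]
    exact mul_lt_mul_of_pos_left (by omega) hQ1
  rcases lt_or_gt_of_ne hrp with hlt | hgt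
  · rw [if_neg (by omega)] at e1 ⊢
    rw [e3] at e2
    rw [if_pos (by omega)] at e2
    omega
  · rw [if_pos (by omega)] at e1 ⊢
    rw [e3] at e2
    rw [if_neg (by omega)] at e2
    omega

lemma sum_split (p : ℕ) (hp2 : p % 2 = 1) (f : ℕ → ℕ) :
    ∑ i ∈ Ioo 0 p, f i = ∑ i ∈ Ico 1 (p/2 + 1), (f i + f (p - i)) := by
  have h1 : Finset.Ioo 0 p = Finset.Ico 1 p := by
    ext x; simp only [mem_Ioo, mem_Ico]; omega
  rw [h1, ← Finset.sum_Ico_consecutive f (by omega : 1 ≤ p/2+1) (by omega : p/2+1 ≤ p),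
    Finset.sum_add_distrib]
  congr 1
  refine Finset.sum_nbij' (fun a => p - a) (fun b => p - b) ?_ ?_ ?_ ?_ ?_
  · intro a ha; simp only [mem_Ico] at *; beta_reduce; omega
  · intro b hb; simp only [mem_Ico] at *; beta_reduce; omega
  · intro a ha; simp only [mem_Ico] at ha; beta_reduce; omega
  · intro b hb; simp only [mem_Ico] at hb; beta_reduce; omega
  · intro a ha; simp only [mem_Ico] at ha
    beta_reduce; congr 1; omega

lemma S_eq (p q : ℕ) (hp2 : p % 2 = 1) :
    ((Finset.Ioo 0 p).filter (fun j => j % 2 = 1 ∧ p < (j * q) % (2 * p))).card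
      = ∑ i ∈ Ico 1 (p/2 + 1), (if p < (q*(p-2*i)) % (2*p) then 1 else 0) := by
  rw [Finset.card_filter]
  have h1 : ∑ j ∈ Ioo 0 p, (if (j % 2 = 1 ∧ p < (j*q) % (2*p)) then 1 else 0)
      = ∑ j ∈ (Ioo 0 p).filter (fun j => j % 2 = 1),
          (if p < (j*q) % (2*p) then 1 else 0) := by
    rw [Finset.sum_filter]
    refine Finset.sum_congr rfl fun j _ => ?_
    by_cases h : j % 2 = 1 <;> simp [h]
  rw [h1]
  refine Finset.sum_nbij' (fun j => (p - j)/2) (fun i => p - 2*i) ?_ ?_ ?_ ?_ ?_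
  · intro a ha; simp only [mem_filter, mem_Ioo, mem_Ico] at *; beta_reduce; omega
  · intro b hb; simp only [mem_filter, mem_Ioo, mem_Ico] at *; beta_reduce; omega
  · intro a ha; simp only [mem_filter, mem_Ioo] at ha; beta_reduce; omega
  · intro b hb; simp only [mem_Ico] at hb; beta_reduce; omega
  · intro a ha; simp only [mem_filter, mem_Ioo] at ha
    have he : p - 2*((p - a)/2) = a := by omega
    rw [he, mul_comm a q]

lemma myGaussSum (p K : ℕ) :
    ∑ i ∈ Ico 1 (K+1), (p + 2*i + 1) = K*(p+1) + K*(K+1) := by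
  induction K with
  | zero => simp
  | succ n ih =>
    rw [Finset.sum_Ico_succ_top (by omega), ih]; ring

theorem sigmaClassical_add_p_odd (p q : ℕ) (hp : 0 < p) (hpq : p < q)
    (hco : Nat.Coprime p q) (hpo : Odd p) :
    sigmaClassical p (p + q) =
      sigmaClassical p q -
        4 * (((Finset.Ioo 0 p).filter
          (fun j => j % 2 = 1 ∧ p < (j * q) % (2 * p))).card : ℤ) +
        ((p : ℤ) - 1) * ((p : ℤ) + 3) / 2 := by
  have hp2 : p % 2 = 1 := Nat.odd_iff.mp hpo
  set K := p / 2 with hKdef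
  have hKp : p = 2*K + 1 := by omega
  have hQ1 : 0 < q := by omega
  have hQ2 : 0 < p + q := by omega
  have hN1 : latticeCount p q (1/2) = ∑ i ∈ Ico 1 (K+1), (cnt p q i + cnt p q (p-i)) := by
    rw [latticeCount_eq p q hp hQ1, sum_split p hp2]
  have hN2 : latticeCount p (p+q) (1/2)
      = ∑ i ∈ Ico 1 (K+1), (cnt p (p+q) i + cnt p (p+q) (p-i)) := by
    rw [latticeCount_eq p (p+q) hp hQ2, sum_split p hp2]
  have hsum : (∑ i ∈ Ico 1 (K+1), (cnt p (p+q) i + cnt p (p+q) (p-i)))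
      + 2*(∑ i ∈ Ico 1 (K+1), (if p < (q*(p-2*i)) % (2*p) then 1 else 0))
      = (∑ i ∈ Ico 1 (K+1), (cnt p q i + cnt p q (p-i)))
        + ∑ i ∈ Ico 1 (K+1), (p + 2*i + 1) := by
    rw [Finset.mul_sum, ← Finset.sum_add_distrib, ← Finset.sum_add_distrib]
    refine Finset.sum_congr rfl fun i hi => ?_
    simp only [mem_Ico] at hi
    exact pairDiff p q i hpq hco hp2 hi.1 (by omega)
  rw [myGaussSum] at hsum
  have hfinal : latticeCount p (p+q) (1/2)
      + 2*(((Finset.Ioo 0 p).filter (fun j => j % 2 = 1 ∧ p < (j * q) % (2 * p))).card)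
      = latticeCount p q (1/2) + (K*(p+1) + K*(K+1)) := by
    rw [hN2, hN1, S_eq p q hp2]
    exact hsum
  have hz : (latticeCount p (p+q) (1/2) : ℤ)
      + 2*((((Finset.Ioo 0 p).filter (fun j => j % 2 = 1 ∧ p < (j * q) % (2 * p))).card : ℤ))
      = (latticeCount p q (1/2) : ℤ) + ((K:ℤ)*((p:ℤ)+1) + (K:ℤ)*((K:ℤ)+1)) := by
    exact_mod_cast hfinal
  have hpz : (p:ℤ) = 2*(K:ℤ)+1 := by exact_mod_cast hKp
  have hdiv : ((p:ℤ)-1)*((p:ℤ)+3)/2 = 2*(K:ℤ)*((K:ℤ)+2) := by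
    rw [hpz, show (2*(K:ℤ)+1-1)*(2*(K:ℤ)+1+3) = 2*(2*(K:ℤ)*((K:ℤ)+2)) from by ring,
      Int.mul_ediv_cancel_left _ two_ne_zero]
  simp only [sigmaClassical, sigmaT]
  rw [hdiv]
  push_cast
  rw [hpz] at hz ⊢
  linear_combination 2*hz
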